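/- Let p and p* be real numbers and c = (p* − p)/2. For every n ≥ 0 and every real number x, the complex number i^n · q_n(c + i x) is real; that is, the function q̂_n(x) := i^n q_n(c + i x) is a real-valued function of the real variable x (in fact a real polynomial in x). -/

import Mathlib

open Complex Filter Topology

private lemma hasDerivAt_conj_conj {f : ℂ → ℂ} {f' z : ℂ}
    (h : HasDerivAt f f' ((starRingEnd ℂ) z)) :
    HasDerivAt (fun u => (starRingEnd ℂ) (f ((starRingEnd ℂ) u))) ((starRingEnd ℂ) f') z := by
  rw [hasDerivAt_iff_tendsto_slope] at h ⊢
  have hconj : Tendsto (fun u : ℂ => (starRingEnd ℂ) u) (𝓝[≠] z) (𝓝[≠] ((starRingEnd ℂ) z)) := by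
    rw [tendsto_nhdsWithin_iff]
    constructor
    · exact ((Complex.continuous_conj.tendsto z).mono_left nhdsWithin_le_nhds)
    · filter_upwards [self_mem_nhdsWithin] with u hu
      simp only [Set.mem_compl_iff, Set.mem_singleton_iff] at hu ⊢
      exact fun hh => hu (by simpa using congrArg (starRingEnd ℂ) hh)
  have h2 : Tendsto (fun u => (starRingEnd ℂ) (slope f ((starRingEnd ℂ) z) ((starRingEnd ℂ) u)))
      (𝓝[≠] z) (𝓝 ((starRingEnd ℂ) f')) :=
    ((Complex.continuous_conj.tendsto f').comp (h.comp hconj))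
  refine h2.congr (fun u => ?_)
  simp only [slope_def_field]
  rw [map_div₀, map_sub, map_sub]
  simp

private lemma deriv_conj_conj' (f : ℂ → ℂ) (z : ℂ) :
    deriv (fun u => (starRingEnd ℂ) (f ((starRingEnd ℂ) u))) z
      = (starRingEnd ℂ) (deriv f ((starRingEnd ℂ) z)) := by
  by_cases h : DifferentiableAt ℂ f ((starRingEnd ℂ) z)
  · exact (hasDerivAt_conj_conj h.hasDerivAt).deriv
  · have h2 : ¬ DifferentiableAt ℂ (fun u => (starRingEnd ℂ) (f ((starRingEnd ℂ) u))) z := by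
      intro hg
      apply h
      set g : ℂ → ℂ := fun u => (starRingEnd ℂ) (f ((starRingEnd ℂ) u)) with hgdef
      have hz : ((starRingEnd ℂ) ((starRingEnd ℂ) z)) = z := by simp
      have hg' : HasDerivAt g (deriv g z) ((starRingEnd ℂ) ((starRingEnd ℂ) z)) := by
        rw [hz]; exact hg.hasDerivAt
      have h3 := hasDerivAt_conj_conj hg'
      have heq : f =ᶠ[𝓝 ((starRingEnd ℂ) z)]
          (fun u => (starRingEnd ℂ) (g ((starRingEnd ℂ) u))) := by
        filter_upwards with u
        simp [hgdef]
      exact (h3.congr_of_eventuallyEq heq).differentiableAt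
    rw [deriv_zero_of_not_differentiableAt h, deriv_zero_of_not_differentiableAt h2, map_zero]

private lemma iteratedDeriv_conj_conj (f : ℂ → ℂ) (n : ℕ) (z : ℂ) :
    iteratedDeriv n (fun u => (starRingEnd ℂ) (f ((starRingEnd ℂ) u))) z
      = (starRingEnd ℂ) (iteratedDeriv n f ((starRingEnd ℂ) z)) := by
  induction n generalizing f z with
  | zero => simp
  | succ n ih =>
    rw [iteratedDeriv_succ, iteratedDeriv_succ]
    have : deriv (iteratedDeriv n (fun u => (starRingEnd ℂ) (f ((starRingEnd ℂ) u)))) z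
        = deriv (fun u => (starRingEnd ℂ) (iteratedDeriv n f ((starRingEnd ℂ) u))) z := by
      congr 1
      funext u
      exact ih f u
    rw [this, deriv_conj_conj']

/-- `qpoly p ps n s` is `n!` times the `n`-th Taylor coefficient at `z = 0` of
`z ↦ (1 - z)^(p+s) * (1 + z)^(ps - s)` (principal branch powers). -/
noncomputable def qpoly (p ps : ℝ) (n : ℕ) (s : ℂ) : ℂ :=
  iteratedDeriv n (fun z : ℂ => (1 - z) ^ ((p : ℂ) + s) * (1 + z) ^ ((ps : ℂ) - s)) 0

theorem qpoly_hat_real (p ps : ℝ) (c : ℝ) (hc : c = (ps - p) / 2) (n : ℕ) (x : ℝ) :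
    (Complex.I ^ n * qpoly p ps n ((c : ℂ) + Complex.I * (x : ℂ))).im = 0 := by
  set s : ℂ := (c : ℂ) + Complex.I * (x : ℂ) with hs
  set a : ℂ := (p : ℂ) + s with ha
  set b : ℂ := (ps : ℂ) - s with hb
  set f : ℂ → ℂ := fun z => (1 - z) ^ a * (1 + z) ^ b with hf
  -- key conjugation identities
  have hca : (starRingEnd ℂ) a = b := by
    rw [ha, hb, hs]
    have : (c : ℂ) = ((ps : ℂ) - (p : ℂ)) / 2 := by
      rw [hc]; push_cast; ring
    simp only [map_add, map_mul, Complex.conj_ofReal, Complex.conj_I]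
    rw [this]; ring
  have hcb : (starRingEnd ℂ) b = a := by
    have := congrArg (starRingEnd ℂ) hca
    simpa using this.symm
  -- the functional equation near 0
  have hfun : (fun u => (starRingEnd ℂ) (f ((starRingEnd ℂ) u))) =ᶠ[𝓝 (0 : ℂ)]
      (fun u => f (-u)) := by
    have hball : Metric.ball (0 : ℂ) 1 ∈ 𝓝 (0 : ℂ) := Metric.ball_mem_nhds 0 one_pos
    filter_upwards [hball] with u hu
    rw [Metric.mem_ball, dist_zero_right] at hu
    have hre : |u.re| < 1 := lt_of_le_of_lt (Complex.abs_re_le_norm u) hu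
    have h1 : ((1 : ℂ) - (starRingEnd ℂ) u).arg ≠ Real.pi := by
      intro hpi
      rw [Complex.arg_eq_pi_iff] at hpi
      have : (1 : ℝ) - u.re < 0 := by simpa using hpi.1
      have := abs_lt.mp hre
      linarith
    have h2 : ((1 : ℂ) + (starRingEnd ℂ) u).arg ≠ Real.pi := by
      intro hpi
      rw [Complex.arg_eq_pi_iff] at hpi
      have : (1 : ℝ) + u.re < 0 := by simpa using hpi.1
      have := abs_lt.mp hre
      linarith
    have e1 : (starRingEnd ℂ) (((1 : ℂ) - (starRingEnd ℂ) u) ^ a) = (1 - u) ^ b := by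
      have := Complex.conj_cpow ((1 : ℂ) - (starRingEnd ℂ) u) b h1
      rw [hcb] at this
      rw [← this]
      simp
    have e2 : (starRingEnd ℂ) (((1 : ℂ) + (starRingEnd ℂ) u) ^ b) = (1 + u) ^ a := by
      have := Complex.conj_cpow ((1 : ℂ) + (starRingEnd ℂ) u) a h2
      rw [hca] at this
      rw [← this]
      simp
    simp only [hf, map_mul, e1, e2]
    ring_nf
  -- conjugate of qpoly
  have hq : (starRingEnd ℂ) (qpoly p ps n s) = (-1 : ℂ) ^ n * qpoly p ps n s := by
    have h0 : (starRingEnd ℂ) (iteratedDeriv n f 0)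
        = iteratedDeriv n (fun u => (starRingEnd ℂ) (f ((starRingEnd ℂ) u))) 0 := by
      have := iteratedDeriv_conj_conj f n 0
      rw [map_zero] at this
      exact this.symm
    have h1 : iteratedDeriv n (fun u => (starRingEnd ℂ) (f ((starRingEnd ℂ) u))) 0
        = iteratedDeriv n (fun u => f (-u)) 0 := hfun.iteratedDeriv_eq n
    have h2 : iteratedDeriv n (fun u => f (-u)) 0 = (-1 : ℂ) ^ n • iteratedDeriv n f (-0) :=
      iteratedDeriv_comp_neg n f 0
    have hqf : qpoly p ps n s = iteratedDeriv n f 0 := rfl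
    rw [hqf, h0, h1, h2]
    simp [smul_eq_mul]
  -- conclude
  rw [← Complex.conj_eq_iff_im]
  rw [map_mul, hq, map_pow, Complex.conj_I]
  rw [show (-Complex.I) ^ n * ((-1 : ℂ) ^ n * qpoly p ps n s)
      = ((-Complex.I) * (-1)) ^ n * qpoly p ps n s by rw [mul_pow]; ring]
  simp
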